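/- arXiv:0806.1912 — 2 statements merged into one kernel-verified Lean document; each statement's English description precedes it below -/
import Mathlib

section
/- For any relatively prime positive integers p and q with p ≥ q, there exists a unique sequence of positive integers a₁,…,a_k with a_i ≥ 2 for all i whenever k > 1 (and a₁ ≥ 1 arbitrary when k = 1) such that p/q equals the negative continued fraction a₁ - 1/(a₂ - 1/(a₃ - ⋯ - 1/a_k)). -/
/-- The negative (Hirzebruch–Jung) continued fraction
`[a₁, …, a_k]⁻ = a₁ - 1/(a₂ - 1/(⋯ - 1/a_k))`, as a rational number.
Note that in `ℚ` we have `1/0 = 0`, so `ncf [a] = a`. -/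
def ncf : List ℤ → ℚ
  | [] => 0
  | a :: l => (a : ℚ) - 1 / ncf l

theorem ncf_gt_one (l : List ℤ) (hne : l ≠ []) (h2 : ∀ x ∈ l, 2 ≤ x) : 1 < ncf l := by
  induction l with
  | nil => exact absurd rfl hne
  | cons a t ih =>
    have ha : (2:ℚ) ≤ (a:ℚ) := by exact_mod_cast h2 a (by simp)
    cases t with
    | nil =>
      show (1:ℚ) < (a:ℚ) - 1 / ncf []
      simp [ncf]; linarith
    | cons b s =>
      have ht : 1 < ncf (b :: s) := ih (by simp) (fun x hx => h2 x (List.mem_cons_of_mem _ hx))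
      have hlt : 1 / ncf (b :: s) < 1 := by
        rw [div_lt_one (by linarith)]; linarith
      have h0 : 0 < 1 / ncf (b :: s) := by positivity
      show (1:ℚ) < (a:ℚ) - 1 / ncf (b :: s)
      linarith

theorem exists_ncf : ∀ q : ℕ, ∀ p : ℕ, 0 < q → q < p → Nat.Coprime p q →
    ∃ L : List ℤ, L ≠ [] ∧ (∀ x ∈ L, 2 ≤ x) ∧ ncf L = (p:ℚ) / q := by
  intro q
  induction q using Nat.strong_induction_on with
  | _ q ih =>
    intro p hq hqp hcop
    rcases eq_or_lt_of_le (show 1 ≤ q from hq) with h1 | h1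
    · -- q = 1
      refine ⟨[(p:ℤ)], by simp, ?_, ?_⟩
      · intro x hx; simp at hx; subst hx; omega
      · show (p:ℚ) - 1 / ncf [] = (p:ℚ) / q
        simp [ncf, ← h1]
    · -- 1 < q
      have hndvd : ¬ q ∣ p := by
        intro hd
        have h1 : q ∣ Nat.gcd p q := Nat.dvd_gcd hd dvd_rfl
        rw [hcop] at h1
        have := Nat.le_of_dvd one_pos h1
        omega
      have hmod : 0 < p % q := Nat.pos_of_ne_zero (fun h => hndvd (Nat.dvd_of_mod_eq_zero h))
      have hmodlt : p % q < q := Nat.mod_lt _ (by omega)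
      set r := q - p % q with hr
      have hr1 : 0 < r := by omega
      have hrq : r < q := by omega
      have hcopm : Nat.gcd q (p % q) = 1 := by
        rw [Nat.gcd_comm, ← Nat.gcd_rec]
        exact hcop.symm
      have hcop' : Nat.Coprime q r := by
        have hd1 : Nat.gcd q r ∣ q := Nat.gcd_dvd_left _ _
        have hd2 : Nat.gcd q r ∣ r := Nat.gcd_dvd_right _ _
        have hd3 : Nat.gcd q r ∣ p % q := by
          have h' : Nat.gcd q r ∣ q - r := Nat.dvd_sub hd1 hd2
          have hqr : q - r = p % q := by omega
          rwa [hqr] at h'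
        have : Nat.gcd q r ∣ Nat.gcd q (p % q) := Nat.dvd_gcd hd1 hd3
        rw [hcopm] at this
        exact Nat.eq_one_of_dvd_one this
      obtain ⟨L', hne', h2', hval'⟩ := ih r hrq q hr1 hrq hcop'
      set a : ℕ := p / q + 1 with ha
      have haq : a * q = p + r := by
        have hdm := Nat.div_add_mod p q
        have h' : a * q = q * (p / q) + q := by rw [ha]; ring
        omega
      have ha2 : 2 ≤ a := by
        have : 1 ≤ p / q := (Nat.one_le_div_iff (by omega)).mpr (le_of_lt hqp)
        omega
      refine ⟨(a:ℤ) :: L', by simp, ?_, ?_⟩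
      · intro x hx
        rcases List.mem_cons.mp hx with h | h
        · subst h; exact_mod_cast ha2
        · exact h2' x h
      · have hLpos : 1 < ncf L' := ncf_gt_one L' hne' h2'
        have hq0 : (q:ℚ) ≠ 0 := by positivity
        have hr0 : (r:ℚ) ≠ 0 := by positivity
        show (a:ℚ) - 1 / ncf L' = (p:ℚ) / q
        rw [hval']
        have hqr : (q:ℚ) / r ≠ 0 := by positivity
        field_simp
        have : (a:ℚ) * q = p + r := by exact_mod_cast haq
        linarith

theorem ncf_unique : ∀ a b : List ℤ, a ≠ [] → b ≠ [] →
    (∀ x ∈ a, 1 ≤ x) → (1 < a.length → ∀ x ∈ a, 2 ≤ x) →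
    (∀ x ∈ b, 1 ≤ x) → (1 < b.length → ∀ x ∈ b, 2 ≤ x) →
    ncf a = ncf b → a = b := by
  intro a
  induction a with
  | nil => intro b hne; exact absurd rfl hne
  | cons x s ih =>
    intro b _ hbne h1a h2a h1b h2b heq
    cases b with
    | nil => exact absurd rfl hbne
    | cons y t =>
      cases s with
      | nil =>
        cases t with
        | nil =>
          have : (x:ℚ) - 1 / ncf [] = (y:ℚ) - 1 / ncf [] := heq
          have : (x:ℚ) = y := by simpa [ncf] using this
          have : x = y := by exact_mod_cast this
          rw [this]
        | cons c u =>
          exfalso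
          have ht : 1 < ncf (c :: u) :=
            ncf_gt_one _ (by simp) (fun z hz => h2b (by simp) z (List.mem_cons_of_mem _ hz))
          have hlt : 1 / ncf (c :: u) < 1 := by
            rw [div_lt_one (by linarith)]; linarith
          have h0 : 0 < 1 / ncf (c :: u) := by positivity
          have heq' : (x:ℚ) - 1 / ncf [] = (y:ℚ) - 1 / ncf (c :: u) := heq
          rw [show ncf [] = 0 from rfl, div_zero, sub_zero] at heq'
          have hxy1 : (y:ℚ) - 1 < (x:ℚ) := by rw [heq'] ; linarith
          have hxy2 : (x:ℚ) < (y:ℚ) := by rw [heq'] ; linarith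
          have h1 : y - 1 < x := by exact_mod_cast hxy1
          have h2 : x < y := by exact_mod_cast hxy2
          omega
      | cons c u =>
        have hs : 1 < ncf (c :: u) :=
          ncf_gt_one _ (by simp) (fun z hz => h2a (by simp) z (List.mem_cons_of_mem _ hz))
        have hlts : 1 / ncf (c :: u) < 1 := by
          rw [div_lt_one (by linarith)]; linarith
        have h0s : 0 < 1 / ncf (c :: u) := by positivity
        cases t with
        | nil =>
          exfalso
          have heq' : (x:ℚ) - 1 / ncf (c :: u) = (y:ℚ) - 1 / ncf [] := heq
          rw [show ncf [] = 0 from rfl, div_zero, sub_zero] at heq'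
          have hxy1 : (x:ℚ) - 1 < (y:ℚ) := by rw [← heq'] ; linarith
          have hxy2 : (y:ℚ) < (x:ℚ) := by rw [← heq'] ; linarith
          have h1 : x - 1 < y := by exact_mod_cast hxy1
          have h2 : y < x := by exact_mod_cast hxy2
          omega
        | cons d v =>
          have htv : 1 < ncf (d :: v) :=
            ncf_gt_one _ (by simp) (fun z hz => h2b (by simp) z (List.mem_cons_of_mem _ hz))
          have hltt : 1 / ncf (d :: v) < 1 := by
            rw [div_lt_one (by linarith)]; linarith
          have h0t : 0 < 1 / ncf (d :: v) := by positivity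
          have heq' : (x:ℚ) - 1 / ncf (c :: u) = (y:ℚ) - 1 / ncf (d :: v) := heq
          have hxy1 : (y:ℚ) - 1 < (x:ℚ) := by linarith
          have hxy2 : (x:ℚ) - 1 < (y:ℚ) := by linarith
          have hb1 : y - 1 < x := by exact_mod_cast hxy1
          have hb2 : x - 1 < y := by exact_mod_cast hxy2
          have hxy : x = y := by omega
          have hdiv : 1 / ncf (c :: u) = 1 / ncf (d :: v) := by
            have : (x:ℚ) = y := by exact_mod_cast hxy
            linarith
          have hncf : ncf (c :: u) = ncf (d :: v) := by
            have hc0 : ncf (c :: u) ≠ 0 := by linarith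
            have hd0 : ncf (d :: v) ≠ 0 := by linarith
            field_simp at hdiv
            exact hdiv.symm
          have hrest : (c :: u) = (d :: v) := by
            apply ih (d :: v) (by simp) (by simp)
            · intro z hz
              have := h2a (by simp) z (List.mem_cons_of_mem _ hz); omega
            · intro _ z hz
              exact h2a (by simp) z (List.mem_cons_of_mem _ hz)
            · intro z hz
              have := h2b (by simp) z (List.mem_cons_of_mem _ hz); omega
            · intro _ z hz
              exact h2b (by simp) z (List.mem_cons_of_mem _ hz)
            · exact hncf
          rw [hxy, hrest]

/-- For any relatively prime positive integers `p ≥ q` there is a unique sequence of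
positive integers `a₁, …, a_k` (with all `aᵢ ≥ 2` when `k > 1`) whose negative continued
fraction equals `p/q`, and all intermediate denominators are nonzero. -/
theorem stmt0 (p q : ℕ) (hp : 0 < p) (hq : 0 < q) (hqp : q ≤ p)
    (hcop : Nat.Coprime p q) :
    ∃! a : List ℤ, a ≠ [] ∧ (∀ x ∈ a, 1 ≤ x) ∧
      (1 < a.length → ∀ x ∈ a, 2 ≤ x) ∧
      (∀ i, i < a.length → ncf (a.drop i) ≠ 0) ∧
      (p : ℚ) / (q : ℚ) = ncf a := by
  have main : ∃ L : List ℤ, L ≠ [] ∧ (∀ x ∈ L, 1 ≤ x) ∧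
      (1 < L.length → ∀ x ∈ L, 2 ≤ x) ∧
      (∀ i, i < L.length → ncf (L.drop i) ≠ 0) ∧
      (p : ℚ) / (q : ℚ) = ncf L := by
    rcases eq_or_lt_of_le hqp with h | h
    · -- p = q, so p = q = 1
      have hp1 : p = 1 := by
        have := hcop
        unfold Nat.Coprime at this
        rw [← h, Nat.gcd_self] at this
        omega
      have hq1 : q = 1 := by omega
      refine ⟨[1], by simp, by simp, by simp, ?_, ?_⟩
      · intro i hi
        simp at hi
        subst hi
        show ncf [1] ≠ 0
        show (1:ℚ) - 1 / ncf [] ≠ 0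
        simp [ncf]
      · show (p:ℚ)/q = (1:ℚ) - 1 / ncf []
        simp [ncf, hp1, hq1]
    · obtain ⟨L, hne, h2, hval⟩ := exists_ncf q p hq h hcop
      refine ⟨L, hne, fun x hx => by have := h2 x hx; omega, fun _ => h2, ?_, hval.symm⟩
      intro i hi
      have hdne : L.drop i ≠ [] := by
        intro hnil
        have := List.drop_eq_nil_iff.mp hnil
        omega
      have : 1 < ncf (L.drop i) :=
        ncf_gt_one _ hdne (fun z hz => h2 z (List.mem_of_mem_drop hz))
      linarith
  obtain ⟨L, hLne, hL1, hL2, hLd, hLv⟩ := main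
  refine ⟨L, ⟨hLne, hL1, hL2, hLd, hLv⟩, ?_⟩
  rintro b ⟨hbne, hb1, hb2, hbd, hbv⟩
  exact ncf_unique b L hbne hLne hb1 hb2 hL1 hL2 (by rw [← hbv, ← hLv])
end

section
/- For any relatively prime positive integers p ≥ q, there exist a positive integer k and integers m₁,…,m_k with m₁ > 0, m_k > 0, and m_i ≥ 0 for 1 < i < k, such that p/q = [a₁, a₂, …, a_k]⁻ where a₁ = m₁ when k = 1, and when k > 1, a₁ = m₁ + 1, a_k = m_k + 1, and a_i = m_i + 2 for 1 < i < k. Moreover this sequence (m₁,…,m_k) is unique. -/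
/-- From multipliers `m₁, …, m_k` form `a₁, …, a_k`: if `k = 1` then `a₁ = m₁`; if `k > 1`
then `a₁ = m₁ + 1`, `a_k = m_k + 1`, and `aᵢ = mᵢ + 2` for `1 < i < k`. -/
def mkA (m : List ℤ) : List ℤ :=
  if m.length ≤ 1 then m
  else m.mapIdx fun i x => if i = 0 ∨ i = m.length - 1 then x + 1 else x + 2

/-- A valid multiplier sequence: nonempty, `m₁ > 0`, `m_k > 0`, `mᵢ ≥ 0` for `1 < i < k`. -/
def GoodM (m : List ℤ) : Prop :=
  m ≠ [] ∧ 0 < m.headI ∧ 0 < m.getLast! ∧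
    ∀ i, 0 < i → i + 1 < m.length → 0 ≤ m.getD i 0

lemma ncf_cons (a : ℤ) (l : List ℤ) : ncf (a :: l) = (a : ℚ) - 1 / ncf l := rfl

lemma getLast!_eq_getElem' (l : List ℤ) (h : l ≠ []) :
    l.getLast! = l[l.length - 1]'(by have := List.length_pos_iff.mpr h; omega) := by
  rw [List.getLast!_of_getLast? (List.getLast?_eq_getLast h), List.getLast_eq_getElem]

lemma ncf_gt_one_s1 : ∀ l : List ℤ, l ≠ [] → (∀ a ∈ l, (2:ℤ) ≤ a) → 1 < ncf l := by
  intro l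
  induction l with
  | nil => simp
  | cons a l ih =>
    intro _ h2
    have ha : (2:ℚ) ≤ (a : ℚ) := by exact_mod_cast h2 a (by simp)
    cases l with
    | nil => simp only [ncf]; norm_num; linarith
    | cons b l =>
      have ht : 1 < ncf (b :: l) := ih (by simp) (fun x hx => h2 x (List.mem_cons_of_mem _ hx))
      have h0 : (0:ℚ) < ncf (b :: l) := lt_trans one_pos ht
      have h1 : 1 / ncf (b :: l) < 1 := by rw [div_lt_one h0]; exact ht
      rw [ncf_cons]
      linarith

/-- Existence of an all-≥2 negative continued fraction expansion when `q < p`. -/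
lemma exists_ge2 : ∀ q : ℕ, ∀ p : ℕ, 0 < q → q < p → Nat.Coprime p q →
    ∃ l : List ℤ, l ≠ [] ∧ (∀ a ∈ l, (2:ℤ) ≤ a) ∧ ncf l = (p:ℚ)/(q:ℚ) := by
  intro q
  induction q using Nat.strong_induction_on with
  | _ q ih =>
    intro p hq hqp hcop
    rcases eq_or_lt_of_le (show 1 ≤ q from hq) with h1 | h1
    · -- q = 1
      have hq1 : q = 1 := h1.symm
      subst hq1
      refine ⟨[(p:ℤ)], by simp, ?_, ?_⟩
      · intro a ha; simp at ha; subst ha; exact_mod_cast (by omega : 2 ≤ p)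
      · simp [ncf]
    · -- 1 < q
      have hndvd : ¬ q ∣ p := by
        intro hd
        have : q ∣ Nat.gcd p q := Nat.dvd_gcd hd dvd_rfl
        rw [hcop] at this
        have := Nat.le_of_dvd one_pos this
        omega
      set s := p % q with hs_def
      have hs0 : 0 < s := by
        rcases Nat.eq_zero_or_pos s with h | h
        · exact absurd (Nat.dvd_of_mod_eq_zero h) hndvd
        · exact h
      have hsq : s < q := Nat.mod_lt _ hq
      set r := q - s with hr_def
      have hr0 : 0 < r := by omega
      have hrq : r < q := by omega
      -- coprimality: gcd q r = 1
      have hcop1 : Nat.Coprime s q := by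
        unfold Nat.Coprime
        rw [hs_def, ← Nat.gcd_rec, Nat.gcd_comm]
        exact hcop
      have hcop2 : Nat.Coprime q r := by
        have h3 : Nat.Coprime (q - s) s := (Nat.coprime_sub_self_left (le_of_lt hsq)).mpr
          (Nat.coprime_comm.mp hcop1)
        have h4 : Nat.Coprime (q - s) (s + (q - s)) := by
          rw [Nat.coprime_add_self_right]; exact h3
        have : s + (q - s) = q := by omega
        rw [this] at h4
        exact Nat.coprime_comm.mp h4
      obtain ⟨l', hne', h2', hval'⟩ := ih r hrq q hr0 hrq hcop2
      set a : ℕ := p / q + 1 with ha_def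
      have hkey : a * q = p + r := by
        have hdm := Nat.div_add_mod p q
        have hmul : (p / q + 1) * q = q * (p / q) + q := by ring
        simp only [ha_def, hr_def]
        omega
      refine ⟨(a : ℤ) :: l', by simp, ?_, ?_⟩
      · intro x hx
        rcases List.mem_cons.mp hx with h | h
        · subst h
          have : 2 ≤ a := by
            have : 1 ≤ p / q := Nat.one_le_div_iff hq |>.mpr (le_of_lt hqp)
            omega
          exact_mod_cast this
        · exact h2' x h
      · have hq0 : (q:ℚ) ≠ 0 := by positivity
        have hr0' : (r:ℚ) ≠ 0 := by positivity
        have hncf' : ncf l' ≠ 0 := by rw [hval']; positivity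
        have hkeyQ : (a:ℚ) * q = p + r := by exact_mod_cast hkey
        rw [ncf_cons, hval', one_div_div]
        field_simp
        push_cast
        linarith [hkeyQ]

/-- Uniqueness of all-≥2 expansions. -/
lemma ncf_inj : ∀ l₁ l₂ : List ℤ, l₁ ≠ [] → l₂ ≠ [] → (∀ a ∈ l₁, (2:ℤ) ≤ a) →
    (∀ a ∈ l₂, (2:ℤ) ≤ a) → ncf l₁ = ncf l₂ → l₁ = l₂ := by
  intro l₁
  induction l₁ with
  | nil => intro l₂ h; exact absurd rfl h
  | cons a t₁ ih =>
    intro l₂ _ hne₂ h₁ h₂ hval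
    cases l₂ with
    | nil => exact absurd rfl hne₂
    | cons b t₂ =>
      have sandwich : ∀ (t : List ℤ), t ≠ [] → (∀ a ∈ t, (2:ℤ) ≤ a) →
          0 < 1 / ncf t ∧ 1 / ncf t < 1 := by
        intro t hne h2
        have ht := ncf_gt_one_s1 t hne h2
        have h0 : (0:ℚ) < ncf t := lt_trans one_pos ht
        exact ⟨by positivity, by rw [div_lt_one h0]; exact ht⟩
      cases t₁ with
      | nil =>
        cases t₂ with
        | nil =>
          have hs1 : ncf [a] = (a:ℚ) := by simp [ncf]
          have hs2 : ncf [b] = (b:ℚ) := by simp [ncf]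
          rw [hs1, hs2] at hval
          exact congrArg (fun x => [x]) (show a = b by exact_mod_cast hval)
        | cons x t =>
          exfalso
          obtain ⟨hp, hl⟩ := sandwich (x :: t) (by simp)
            (fun y hy => h₂ y (List.mem_cons_of_mem _ hy))
          have hsingle : ncf [a] = (a:ℚ) := by simp [ncf]
          rw [hsingle, ncf_cons] at hval
          have h01 : (0:ℚ) < (b:ℚ) - a ∧ (b:ℚ) - a < 1 := by constructor <;> linarith
          have : (0:ℤ) < b - a ∧ b - a < 1 := by
            constructor <;> [exact_mod_cast h01.1; exact_mod_cast h01.2]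
          omega
      | cons x₁ s₁ =>
        cases t₂ with
        | nil =>
          exfalso
          obtain ⟨hp, hl⟩ := sandwich (x₁ :: s₁) (by simp)
            (fun y hy => h₁ y (List.mem_cons_of_mem _ hy))
          have hsingle : ncf [b] = (b:ℚ) := by simp [ncf]
          rw [hsingle, ncf_cons] at hval
          have h01 : (0:ℚ) < (a:ℚ) - b ∧ (a:ℚ) - b < 1 := by constructor <;> linarith
          have : (0:ℤ) < a - b ∧ a - b < 1 := by
            constructor <;> [exact_mod_cast h01.1; exact_mod_cast h01.2]
          omega
        | cons x₂ s₂ =>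
          obtain ⟨hp₁, hl₁⟩ := sandwich (x₁ :: s₁) (by simp)
            (fun y hy => h₁ y (List.mem_cons_of_mem _ hy))
          obtain ⟨hp₂, hl₂⟩ := sandwich (x₂ :: s₂) (by simp)
            (fun y hy => h₂ y (List.mem_cons_of_mem _ hy))
          rw [ncf_cons a (x₁ :: s₁), ncf_cons b (x₂ :: s₂)] at hval
          have hab : a = b := by
            have h01 : (-1:ℚ) < (a:ℚ) - b ∧ (a:ℚ) - b < 1 := by constructor <;> linarith
            have : (-1:ℤ) < a - b ∧ a - b < 1 := by
              constructor <;> [exact_mod_cast h01.1; exact_mod_cast h01.2]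
            omega
          subst hab
          have hT : ncf (x₁ :: s₁) = ncf (x₂ :: s₂) := by
            have heq : 1 / ncf (x₁ :: s₁) = 1 / ncf (x₂ :: s₂) := by linarith
            have hn₁ : ncf (x₁ :: s₁) ≠ 0 := by
              intro h; rw [h] at hp₁; norm_num at hp₁
            have hn₂ : ncf (x₂ :: s₂) ≠ 0 := by
              intro h; rw [h] at hp₂; norm_num at hp₂
            field_simp at heq
            exact heq.symm
          have := ih (x₂ :: s₂) (by simp) (by simp)
            (fun y hy => h₁ y (List.mem_cons_of_mem _ hy))
            (fun y hy => h₂ y (List.mem_cons_of_mem _ hy)) hT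
          rw [this]

/-- The inverse of `mkA`. -/
def toM (l : List ℤ) : List ℤ :=
  if l.length ≤ 1 then l
  else l.mapIdx fun i x => if i = 0 ∨ i = l.length - 1 then x - 1 else x - 2

lemma headI_eq_getElem0 (l : List ℤ) (h : l ≠ []) :
    l.headI = l[0]'(List.length_pos_iff.mpr h) := by
  cases l with
  | nil => exact absurd rfl h
  | cons a t => rfl

lemma mkA_length (m : List ℤ) : (mkA m).length = m.length := by
  unfold mkA; split <;> simp

lemma toM_length (l : List ℤ) : (toM l).length = l.length := by
  unfold toM; split <;> simp

lemma mkA_get (m : List ℤ) (h : ¬ m.length ≤ 1) (i : ℕ) (hi : i < m.length) :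
    (mkA m)[i]'(by rw [mkA_length]; exact hi) =
      if i = 0 ∨ i = m.length - 1 then m[i] + 1 else m[i] + 2 := by
  simp only [mkA, if_neg h, List.getElem_mapIdx]

lemma toM_get (l : List ℤ) (h : ¬ l.length ≤ 1) (i : ℕ) (hi : i < l.length) :
    (toM l)[i]'(by rw [toM_length]; exact hi) =
      if i = 0 ∨ i = l.length - 1 then l[i] - 1 else l[i] - 2 := by
  simp only [toM, if_neg h, List.getElem_mapIdx]

lemma mkA_toM (l : List ℤ) : mkA (toM l) = l := by
  by_cases h : l.length ≤ 1
  · simp [mkA, toM, h]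
  · have hlen : (toM l).length = l.length := toM_length l
    have h' : ¬ (toM l).length ≤ 1 := by omega
    apply List.ext_getElem (by rw [mkA_length, hlen])
    intro i h₁ h₂
    rw [mkA_get (toM l) h' i (by omega)]
    rw [toM_get l h i (by omega)]
    simp only [hlen]
    split <;> ring

lemma getLast!_singleton (x : ℤ) : ([x] : List ℤ).getLast! = x := by
  rw [getLast!_eq_getElem' _ (by simp)]
  simp

lemma goodM_singleton (x : ℤ) (hx : 0 < x) : GoodM [x] := by
  refine ⟨by simp, by simpa using hx, ?_, ?_⟩
  · rw [getLast!_singleton]; exact hx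
  · intro i hi hl; simp at hl

lemma goodM_toM (l : List ℤ) (hne : l ≠ []) (h2 : ∀ a ∈ l, (2:ℤ) ≤ a) : GoodM (toM l) := by
  have hpos := List.length_pos_iff.mpr hne
  by_cases h : l.length ≤ 1
  · have hlen : l.length = 1 := by omega
    obtain ⟨x, hx⟩ : ∃ x, l = [x] := by
      cases l with
      | nil => simp at hlen
      | cons a t =>
        cases t with
        | nil => exact ⟨a, rfl⟩
        | cons b s => simp at hlen
    subst hx
    have hx2 : (2:ℤ) ≤ x := h2 x (by simp)
    have : toM [x] = [x] := by simp [toM]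
    rw [this]
    exact goodM_singleton x (by omega)
  · have hlen2 : 2 ≤ l.length := by omega
    have hlen : (toM l).length = l.length := toM_length l
    have hne' : toM l ≠ [] := List.length_pos_iff.mp (by rw [hlen]; omega)
    refine ⟨hne', ?_, ?_, ?_⟩
    · rw [headI_eq_getElem0 _ hne', toM_get l h 0 (by omega)]
      rw [if_pos (Or.inl rfl)]
      have := h2 (l[0]'(by omega)) (List.getElem_mem _)
      omega
    · rw [getLast!_eq_getElem' _ hne']
      have : (toM l)[(toM l).length - 1]'(by omega) =
          (toM l)[l.length - 1]'(by omega) := by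
        congr 1
        rw [hlen]
      rw [this, toM_get l h (l.length - 1) (by omega)]
      rw [if_pos (Or.inr rfl)]
      have := h2 (l[l.length - 1]'(by omega)) (List.getElem_mem _)
      omega
    · intro i hi hilen
      rw [hlen] at hilen
      rw [List.getD_eq_getElem _ _ (by omega : i < (toM l).length),
        toM_get l h i (by omega)]
      have hcond : ¬ (i = 0 ∨ i = l.length - 1) := by omega
      simp only [if_neg hcond]
      have := h2 (l[i]'(by omega)) (List.getElem_mem _)
      omega

lemma mkA_injective : Function.Injective mkA := by
  intro m m' heq
  have hlen : m.length = m'.length := by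
    have h1 : (mkA m).length = m.length := by
      unfold mkA; split <;> simp
    have h2 : (mkA m').length = m'.length := by
      unfold mkA; split <;> simp
    rw [← h1, ← h2, heq]
  by_cases h : m.length ≤ 1
  · simpa [mkA, h, ← hlen] using heq
  · simp only [mkA, if_neg h, if_neg (hlen ▸ h)] at heq
    apply List.ext_getElem hlen
    intro i h₁ h₂
    have := congrArg (fun l => l[i]?) heq
    simp only [List.getElem?_eq_getElem (by simpa using h₁ : i < (List.mapIdx _ m).length),
      List.getElem?_eq_getElem (by simpa [← hlen] using h₁ : i < (List.mapIdx _ m').length),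
      List.getElem_mapIdx, Option.some.injEq] at this
    have hcond : (i = 0 ∨ i = m.length - 1) ↔ (i = 0 ∨ i = m'.length - 1) := by rw [hlen]
    by_cases hc : i = 0 ∨ i = m.length - 1
    · rw [if_pos hc, if_pos (hcond.mp hc)] at this; omega
    · rw [if_neg hc, if_neg (fun hh => hc (hcond.mpr hh))] at this; omega

/-- Classification of `mkA m` for good `m`. -/
lemma goodM_cases (m : List ℤ) (hm : GoodM m) :
    m = [1] ∨ (mkA m ≠ [] ∧ ∀ a ∈ mkA m, (2:ℤ) ≤ a) := by
  obtain ⟨hne, hhead, hlast, hint⟩ := hm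
  have hpos := List.length_pos_iff.mpr hne
  by_cases h : m.length ≤ 1
  · have hlen : m.length = 1 := by omega
    obtain ⟨x, hx⟩ : ∃ x, m = [x] := by
      cases m with
      | nil => simp at hlen
      | cons a t =>
        cases t with
        | nil => exact ⟨a, rfl⟩
        | cons b s => simp at hlen
    subst hx
    simp only [List.headI] at hhead
    rcases eq_or_lt_of_le (show (1:ℤ) ≤ x by omega) with h1 | h1
    · left; rw [← h1]
    · right
      constructor
      · simp [mkA]
      · intro a ha
        simp [mkA] at ha
        omega
  · right
    have hne' : mkA m ≠ [] := List.length_pos_iff.mp (by rw [mkA_length]; omega)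
    refine ⟨hne', ?_⟩
    intro a ha
    simp only [mkA, if_neg h] at ha
    obtain ⟨i, hi, hval⟩ := List.mem_iff_getElem.mp ha
    simp only [List.getElem_mapIdx] at hval
    have hi' : i < m.length := by simpa using hi
    subst hval
    split
    · rename_i hcond
      rcases hcond with h0 | hl
      · subst h0
        rw [headI_eq_getElem0 _ hne] at hhead
        omega
      · subst hl
        rw [getLast!_eq_getElem' _ hne] at hlast
        omega
    · rename_i hcond
      push_neg at hcond
      have := hint i (by omega) (by omega)
      rw [List.getD_eq_getElem _ _ hi'] at this
      omega

lemma ncf_one : ncf [1] = 1 := by simp [ncf]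

/-- For relatively prime positive integers `p ≥ q` there is a unique multiplier sequence
`m₁, …, m_k` (with `m₁, m_k > 0` and interior `mᵢ ≥ 0`) such that
`p/q = [a₁, …, a_k]⁻` for the associated `a`-sequence. -/
theorem stmt1 (p q : ℕ) (hp : 0 < p) (hq : 0 < q) (hqp : q ≤ p)
    (hcop : Nat.Coprime p q) :
    ∃! m : List ℤ, GoodM m ∧ (p : ℚ) / (q : ℚ) = ncf (mkA m) := by
  have hq0 : (q:ℚ) ≠ 0 := by positivity
  -- uniqueness part, shared
  have uniq : ∀ m m' : List ℤ, GoodM m → GoodM m' → ncf (mkA m) = ncf (mkA m') → m = m' := by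
    intro m m' hm hm' hval
    rcases goodM_cases m hm with h1 | h1 <;> rcases goodM_cases m' hm' with h2 | h2
    · rw [h1, h2]
    · exfalso
      subst h1
      have : mkA [1] = [1] := by simp [mkA]
      rw [this, ncf_one] at hval
      have := ncf_gt_one_s1 _ h2.1 h2.2
      rw [← hval] at this
      norm_num at this
    · exfalso
      subst h2
      have : mkA [1] = [1] := by simp [mkA]
      rw [this, ncf_one] at hval
      have := ncf_gt_one_s1 _ h1.1 h1.2
      rw [hval] at this
      norm_num at this
    · exact mkA_injective (ncf_inj _ _ h1.1 h2.1 h1.2 h2.2 hval)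
  rcases eq_or_lt_of_le hqp with heq | hlt
  · -- p = q, so p = q = 1
    have hp1 : p = 1 := by
      rw [Nat.Coprime, heq, Nat.gcd_self] at hcop
      exact hcop
    have hq1 : q = 1 := by omega
    refine ⟨[1], ⟨goodM_singleton 1 one_pos, ?_⟩, ?_⟩
    · have : mkA [1] = [1] := by simp [mkA]
      rw [this, ncf_one, hp1, hq1]
      norm_num
    · intro m' ⟨hm', hval'⟩
      apply uniq m' [1] hm' (goodM_singleton 1 one_pos)
      have : mkA [1] = [1] := by simp [mkA]
      rw [this, ncf_one, ← hval', hp1, hq1]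
      norm_num
  · obtain ⟨l, hne, h2, hval⟩ := exists_ge2 q p hq hlt hcop
    refine ⟨toM l, ⟨goodM_toM l hne h2, ?_⟩, ?_⟩
    · rw [mkA_toM, hval]
    · intro m' ⟨hm', hval'⟩
      apply uniq m' (toM l) hm' (goodM_toM l hne h2)
      rw [mkA_toM, hval, ← hval']
end
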